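/- arXiv:1401.6607 — 6 statements merged into one kernel-verified Lean document; each statement's English description precedes it below -/
import Mathlib

section
/- Assume B : 𝒲 → 𝒴 is a bijective continuous linear map and F is Lipschitz continuous. Then the set Y := (B*)⁻¹(dom F*) is bounded, where B* is the adjoint of B and dom F* := {u ∈ 𝒲 : sup_{w∈𝒲}(⟨u, w⟩ − F(w)) < ∞}. Moreover, for any z = (w, x, y) with w ∈ 𝒲, x ∈ X, y ∈ 𝒴 and any ε ≥ 0, if ḡ_Y(z) ≤ ε, then the pair (w̃, x) with w̃ := B⁻¹(Kx + b) is an ε-solution of AECCO, i.e. G(x) + F(w̃) − f* ≤ ε and Bw̃ − Kx − b = 0. -/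
open RealInnerProductSpace

lemma exists_subgradient' {E : Type*} [NormedAddCommGroup E] [InnerProductSpace ℝ E]
    [FiniteDimensional ℝ E] (F : E → ℝ) (hF : ConvexOn ℝ Set.univ F)
    (hc : Continuous F) (p : E) : ∃ u : E, ∀ v, F p + ⟪u, v - p⟫ ≤ F v := by
  set S : Set (E × ℝ) := {q | F q.1 < q.2} with hS
  have hSopen : IsOpen S := isOpen_lt (hc.comp continuous_fst) continuous_snd
  have hSconv : Convex ℝ S := by
    intro q hq r hr a bb ha hb hab
    simp only [hS, Set.mem_setOf_eq] at hq hr ⊢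
    have h1 := hF.2 (Set.mem_univ q.1) (Set.mem_univ r.1) ha hb hab
    have h2 : a • F q.1 + bb • F r.1 < a • q.2 + bb • r.2 := by
      rcases eq_or_lt_of_le ha with h | h
      · have : bb = 1 := by linarith
        simp only [← h, this, zero_smul, one_smul, zero_add]
        exact hr
      · have l1 : a • F q.1 < a • q.2 := by
          simp only [smul_eq_mul]; exact mul_lt_mul_of_pos_left hq h
        have l2 : bb • F r.1 ≤ bb • r.2 := by
          simp only [smul_eq_mul]; exact mul_le_mul_of_nonneg_left hr.le hb
        linarith
    calc F (a • q + bb • r).1 = F (a • q.1 + bb • r.1) := rfl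
      _ ≤ a • F q.1 + bb • F r.1 := h1
      _ < a • q.2 + bb • r.2 := h2
      _ = (a • q + bb • r).2 := rfl
  have hpt : (p, F p) ∉ S := by simp [hS]
  obtain ⟨f, hf⟩ := geometric_hahn_banach_open_point hSconv hSopen hpt
  set α : ℝ := f (0, 1) with hα
  have hdecomp : ∀ (v : E) (t : ℝ), f (v, t) = f (v, 0) + t * α := by
    intro v t
    have : (v, t) = (v, (0:ℝ)) + t • ((0:E), (1:ℝ)) := by
      simp [Prod.ext_iff]
    rw [this, map_add, map_smul, smul_eq_mul, hα]
  have hαneg : α < 0 := by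
    have h1 := hf (p, F p + 1) (by simp [hS])
    rw [hdecomp] at h1
    have h2 : f (p, F p) = f (p, 0) + F p * α := hdecomp p (F p)
    nlinarith
  have key : ∀ v, f (v, 0) + F v * α ≤ f (p, 0) + F p * α := by
    intro v
    by_contra hcon
    push_neg at hcon
    set d : ℝ := (f (v, 0) + F v * α) - (f (p, 0) + F p * α) with hd
    have hdpos : 0 < d := by linarith
    have hspos : 0 < d / (-α) := div_pos hdpos (by linarith)
    have h1 := hf (v, F v + d / (-α)) (by simp [hS]; linarith)
    rw [hdecomp] at h1
    have h2 : f (p, F p) = f (p, 0) + F p * α := hdecomp p (F p)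
    have hαne : α ≠ 0 := ne_of_lt hαneg
    have h3 : d / (-α) * α = -d := by
      rw [div_neg, neg_mul, div_mul_cancel₀ _ hαne]
    nlinarith
  refine ⟨(-α)⁻¹ • (InnerProductSpace.toDual ℝ E).symm (f.comp (ContinuousLinearMap.inl ℝ E ℝ)), fun v => ?_⟩
  have hinner : ∀ z : E, ⟪(-α)⁻¹ • (InnerProductSpace.toDual ℝ E).symm (f.comp (ContinuousLinearMap.inl ℝ E ℝ)), z⟫ = (-α)⁻¹ * f (z, 0) := by
    intro z
    rw [real_inner_smul_left, InnerProductSpace.toDual_symm_apply]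
    rfl
  rw [hinner]
  have h4 : f (v - p, 0) = f (v, 0) - f (p, 0) := by
    have : ((v - p, (0:ℝ)) : E × ℝ) = (v, (0:ℝ)) - (p, 0) := by simp [Prod.ext_iff]
    rw [this, map_sub]
  rw [h4]
  have h5 := key v
  have h6 : (0:ℝ) < (-α)⁻¹ := inv_pos.mpr (by linarith)
  have h7 : (-α)⁻¹ * (-α) = 1 := inv_mul_cancel₀ (by linarith)
  have h8 : (-α)⁻¹ * ((F p - F v) * α) = F v - F p := by
    have hαne : α ≠ 0 := ne_of_lt hαneg
    rw [inv_neg]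
    field_simp
    ring
  linarith [mul_le_mul_of_nonneg_left (show f (v,0) - f (p,0) ≤ (F p - F v) * α by linarith) h6.le, h8.symm.le, h8.le]

theorem stmt_3
    {𝒲 𝒳 𝒴 : Type*}
    [NormedAddCommGroup 𝒲] [InnerProductSpace ℝ 𝒲] [FiniteDimensional ℝ 𝒲]
    [NormedAddCommGroup 𝒳] [InnerProductSpace ℝ 𝒳] [FiniteDimensional ℝ 𝒳]
    [NormedAddCommGroup 𝒴] [InnerProductSpace ℝ 𝒴] [FiniteDimensional ℝ 𝒴]
    (X : Set 𝒳) (hXclosed : IsClosed X) (hXconv : Convex ℝ X)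
    (G : 𝒳 → ℝ) (G' : 𝒳 → 𝒳) (hGgrad : ∀ p, HasGradientAt G (G' p) p)
    (hGconv : ConvexOn ℝ Set.univ G)
    (L_G : ℝ) (hLG : 0 < L_G)
    (hGsmooth : ∀ x₁ ∈ X, ∀ x₂ ∈ X,
      G x₂ - G x₁ - ⟪G' x₁, x₂ - x₁⟫ ≤ L_G / 2 * ‖x₂ - x₁‖ ^ 2)
    (F : 𝒲 → ℝ) (hFconv : ConvexOn ℝ Set.univ F) (hFlsc : LowerSemicontinuous F)
    (K : 𝒳 →L[ℝ] 𝒴) (B : 𝒲 →L[ℝ] 𝒴) (b : 𝒴)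
    (ws : 𝒲) (xs : 𝒳) (ys : 𝒴) (hxs : xs ∈ X)
    (hsaddle₁ : ∀ yv : 𝒴,
      G xs + F ws - ⟪yv, B ws - K xs - b⟫ ≤ G xs + F ws - ⟪ys, B ws - K xs - b⟫)
    (hsaddle₂ : ∀ wv : 𝒲, ∀ xv ∈ X,
      G xs + F ws - ⟪ys, B ws - K xs - b⟫ ≤ G xv + F wv - ⟪ys, B wv - K xv - b⟫)
    (hB : Function.Bijective B)
    (c : NNReal) (hFlip : LipschitzWith c F)
    (ε : ℝ) (hε : 0 ≤ ε)
    (w : 𝒲) (x : 𝒳) (y : 𝒴) (hx : x ∈ X)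
    (wtil : 𝒲) (hwtil : B wtil = K x + b) :
    Bornology.IsBounded (ContinuousLinearMap.adjoint B ⁻¹' {yv : 𝒲 | BddAbove (Set.range fun wv => ⟪yv, wv⟫ - F wv)}) ∧
    ((⨆ ytil ∈ ContinuousLinearMap.adjoint B ⁻¹' {yv : 𝒲 | BddAbove (Set.range fun wv => ⟪yv, wv⟫ - F wv)},
        (((G x + F w - ⟪ytil, B w - K x - b⟫)
          - (G xs + F ws - ⟪y, B ws - K xs - b⟫) : ℝ) : EReal)) ≤ (ε : EReal) →
      G x + F wtil - (G xs + F ws) ≤ ε ∧ B wtil - K x - b = 0) := by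
  have hFcont : Continuous F := hFlip.continuous
  set e : 𝒲 ≃L[ℝ] 𝒴 :=
    (LinearEquiv.ofBijective (B : 𝒲 →ₗ[ℝ] 𝒴) hB).toContinuousLinearEquiv with he
  set A : 𝒴 →L[ℝ] 𝒲 := (e.symm : 𝒴 →L[ℝ] 𝒲) with hA
  have hBA : ∀ yv : 𝒴, B (A yv) = yv := fun yv => e.apply_symm_apply yv
  have hAB : ∀ wv : 𝒲, A (B wv) = wv := fun wv => e.symm_apply_apply wv
  have hadjBA : ∀ u : 𝒲,
      ContinuousLinearMap.adjoint B (ContinuousLinearMap.adjoint A u) = u := by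
    intro u
    apply ext_inner_right ℝ
    intro z
    rw [ContinuousLinearMap.adjoint_inner_left, ContinuousLinearMap.adjoint_inner_left, hAB]
  have hadjAB : ∀ u : 𝒴,
      ContinuousLinearMap.adjoint A (ContinuousLinearMap.adjoint B u) = u := by
    intro u
    apply ext_inner_right ℝ
    intro z
    rw [ContinuousLinearMap.adjoint_inner_left, ContinuousLinearMap.adjoint_inner_left, hBA]
  -- norm bound on dom F*
  have hdom : ∀ u : 𝒲, BddAbove (Set.range fun wv => ⟪u, wv⟫ - F wv) → ‖u‖ ≤ c := by
    rintro u ⟨M, hM⟩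
    by_contra hcon
    push_neg at hcon
    have hupos : (0:ℝ) < ‖u‖ := lt_of_le_of_lt c.coe_nonneg hcon
    have hM0 : -F 0 ≤ M := by
      have := hM (Set.mem_range_self 0)
      simpa using this
    set δ : ℝ := ‖u‖ * (‖u‖ - c) with hδ
    have hδpos : 0 < δ := mul_pos hupos (by linarith)
    set t : ℝ := (M + F 0 + 1) / δ with ht
    have htpos : 0 < t := div_pos (by linarith) hδpos
    have h1 := hM (Set.mem_range_self (t • u))
    have h2 : ⟪u, t • u⟫ = t * ‖u‖ ^ 2 := by
      rw [real_inner_smul_right, real_inner_self_eq_norm_sq]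
    have h3 : F (t • u) ≤ F 0 + c * (t * ‖u‖) := by
      have := hFlip.dist_le_mul (t • u) 0
      rw [Real.dist_eq, dist_zero_right, norm_smul, Real.norm_eq_abs,
        abs_of_pos htpos] at this
      have := abs_le.mp this
      linarith [this.2]
    have h4 : t * δ = M + F 0 + 1 := div_mul_cancel₀ _ (ne_of_gt hδpos)
    have h5 : t * δ = t * ‖u‖ ^ 2 - c * (t * ‖u‖) := by rw [hδ]; ring
    have h1 : ⟪u, t • u⟫ - F (t • u) ≤ M := h1
    rw [h2] at h1
    linarith
  constructor
  · refine (Metric.isBounded_closedBall (x := (0:𝒴))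
      (r := ‖ContinuousLinearMap.adjoint A‖ * c)).subset ?_
    intro u hu
    rw [Set.mem_preimage, Set.mem_setOf_eq] at hu
    rw [Metric.mem_closedBall, dist_zero_right]
    calc ‖u‖ = ‖ContinuousLinearMap.adjoint A (ContinuousLinearMap.adjoint B u)‖ := by
          rw [hadjAB]
      _ ≤ ‖ContinuousLinearMap.adjoint A‖ * ‖ContinuousLinearMap.adjoint B u‖ :=
          (ContinuousLinearMap.adjoint A).le_opNorm _
      _ ≤ ‖ContinuousLinearMap.adjoint A‖ * c := by
          exact mul_le_mul_of_nonneg_left (hdom _ hu) (norm_nonneg _)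
  · intro hsup
    have heq : B wtil - K x - b = 0 := by rw [hwtil]; abel
    have hr0 : B ws - K xs - b = 0 := by
      have h := hsaddle₁ (ys - (B ws - K xs - b))
      rw [inner_sub_left] at h
      have h2 : ⟪B ws - K xs - b, B ws - K xs - b⟫ ≤ 0 := by linarith
      rw [real_inner_self_eq_norm_sq] at h2
      have : ‖B ws - K xs - b‖ = 0 := by nlinarith [norm_nonneg (B ws - K xs - b)]
      exact norm_eq_zero.mp this
    obtain ⟨u, hu⟩ := exists_subgradient' F hFconv hFcont wtil
    set yt : 𝒴 := ContinuousLinearMap.adjoint A u with hyt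
    have hBy : ContinuousLinearMap.adjoint B yt = u := hadjBA u
    have hmem : yt ∈ ContinuousLinearMap.adjoint B ⁻¹'
        {yv : 𝒲 | BddAbove (Set.range fun wv => ⟪yv, wv⟫ - F wv)} := by
      rw [Set.mem_preimage, Set.mem_setOf_eq, hBy]
      refine ⟨⟪u, wtil⟫ - F wtil, ?_⟩
      rintro r ⟨wv, rfl⟩
      have := hu wv
      rw [inner_sub_right] at this
      simp only
      linarith
    have h1 : (((G x + F w - ⟪yt, B w - K x - b⟫)
        - (G xs + F ws - ⟪y, B ws - K xs - b⟫) : ℝ) : EReal) ≤ (ε : EReal) := by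
      refine le_trans ?_ hsup
      exact le_iSup₂ (f := fun ytil (_ : ytil ∈ ContinuousLinearMap.adjoint B ⁻¹'
        {yv : 𝒲 | BddAbove (Set.range fun wv => ⟪yv, wv⟫ - F wv)}) =>
        (((G x + F w - ⟪ytil, B w - K x - b⟫)
          - (G xs + F ws - ⟪y, B ws - K xs - b⟫) : ℝ) : EReal)) yt hmem
    have h2 : (G x + F w - ⟪yt, B w - K x - b⟫)
        - (G xs + F ws - ⟪y, B ws - K xs - b⟫) ≤ ε := EReal.coe_le_coe_iff.mp h1
    rw [hr0, inner_zero_right] at h2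
    have h3 : ⟪yt, B w - K x - b⟫ = ⟪u, w - wtil⟫ := by
      have hb' : B w - K x - b = B (w - wtil) := by rw [map_sub, hwtil]; abel
      rw [hb', ← ContinuousLinearMap.adjoint_inner_left, hBy]
    rw [h3] at h2
    have h4 := hu w
    exact ⟨by linarith, heq⟩
end

section
/- Let α ∈ [0,1], let x^ag, x_t, x_{t+1} ∈ X, and set x^md := (1−α)x^ag + αx_t and x⁺ := (1−α)x^ag + αx_{t+1}. Then for every x ∈ X, G(x⁺) ≤ (1−α)G(x^ag) + αG(x) + α⟨∇G(x^md), x_{t+1} − x⟩ + (L_G α²/2)‖x_{t+1} − x_t‖². -/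
open RealInnerProductSpace

/-- Gradient inequality for a convex differentiable function. -/
lemma grad_ineq_aux {𝒳 : Type*} [NormedAddCommGroup 𝒳] [InnerProductSpace ℝ 𝒳] [CompleteSpace 𝒳]
    {G : 𝒳 → ℝ} (hGconv : ConvexOn ℝ Set.univ G)
    {p : 𝒳} {g : 𝒳} (hg : HasGradientAt G g p) (y : 𝒳) :
    G p + ⟪g, y - p⟫ ≤ G y := by
  rcases eq_or_ne y p with rfl | hne
  · simp
  · set φ : ℝ → ℝ := fun t => G (p + t • (y - p)) with hφ
    have hφconv : ConvexOn ℝ Set.univ φ := by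
      have := hGconv.comp_affineMap (AffineMap.lineMap p y)
      have heq : (G ∘ (AffineMap.lineMap p y) : ℝ → ℝ) = φ := by
        funext t
        simp [φ, AffineMap.lineMap_apply, add_comm]
      rw [heq] at this
      simpa using this
    have hd : HasDerivAt φ ⟪g, y - p⟫ 0 := by
      have hline : HasDerivAt (fun t : ℝ => p + t • (y - p)) (y - p) 0 := by
        simpa using ((hasDerivAt_id (0 : ℝ)).smul_const (y - p)).const_add p
      have hF : HasFDerivAt G ((InnerProductSpace.toDual ℝ 𝒳 g : 𝒳 →L[ℝ] ℝ)) (p + (0:ℝ) • (y - p)) := by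
        simpa using hg.hasFDerivAt
      have := hF.comp_hasDerivAt (x := (0 : ℝ))
        (by simpa using hline : HasDerivAt (fun t : ℝ => p + t • (y - p)) (y - p) 0)
      simp only [InnerProductSpace.toDual_apply_apply] at this
      exact this
    have hslope := hφconv.le_slope_of_hasDerivAt (x := (0 : ℝ)) (y := (1 : ℝ))
      (Set.mem_univ _) (Set.mem_univ _) one_pos hd
    have : ⟪g, y - p⟫ ≤ φ 1 - φ 0 := by
      simpa [slope, sub_zero] using hslope
    simp only [φ, one_smul, zero_smul, add_zero] at this
    have hpy : p + (y - p) = y := by abel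
    rw [hpy] at this
    linarith

theorem stmt_4
    {𝒳 : Type*}
    [NormedAddCommGroup 𝒳] [InnerProductSpace ℝ 𝒳] [FiniteDimensional ℝ 𝒳]
    (X : Set 𝒳) (hXclosed : IsClosed X) (hXconv : Convex ℝ X)
    (G : 𝒳 → ℝ) (G' : 𝒳 → 𝒳) (hGgrad : ∀ p, HasGradientAt G (G' p) p)
    (hGconv : ConvexOn ℝ Set.univ G)
    (L_G : ℝ) (hLG : 0 < L_G)
    (hGsmooth : ∀ x₁ ∈ X, ∀ x₂ ∈ X,
      G x₂ - G x₁ - ⟪G' x₁, x₂ - x₁⟫ ≤ L_G / 2 * ‖x₂ - x₁‖ ^ 2)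
    (a : ℝ) (ha0 : 0 ≤ a) (ha1 : a ≤ 1)
    (xag xt xtp : 𝒳) (hxag : xag ∈ X) (hxt : xt ∈ X) (hxtp : xtp ∈ X)
    (xmd xplus : 𝒳)
    (hxmd : xmd = (1 - a) • xag + a • xt)
    (hxplus : xplus = (1 - a) • xag + a • xtp) :
    ∀ x ∈ X, G xplus ≤ (1 - a) * G xag + a * G x + a * ⟪G' xmd, xtp - x⟫
      + L_G * a ^ 2 / 2 * ‖xtp - xt‖ ^ 2 := by
  intro x hx
  set g := G' xmd with hg
  have hxmdX : xmd ∈ X := by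
    rw [hxmd]; exact hXconv hxag hxt (by linarith) ha0 (by ring)
  have hxplusX : xplus ∈ X := by
    rw [hxplus]; exact hXconv hxag hxtp (by linarith) ha0 (by ring)
  -- smoothness at xmd, xplus
  have hsmooth := hGsmooth xmd hxmdX xplus hxplusX
  -- xplus - xmd = a • (xtp - xt)
  have hdiff : xplus - xmd = a • (xtp - xt) := by
    rw [hxplus, hxmd, smul_sub]; abel
  have hnorm : ‖xplus - xmd‖ ^ 2 = a ^ 2 * ‖xtp - xt‖ ^ 2 := by
    rw [hdiff, norm_smul]
    simp [mul_pow, abs_of_nonneg ha0]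
  -- split the inner product
  have hsplit : ⟪g, xplus - xmd⟫
      = (1 - a) * ⟪g, xag - xmd⟫ + a * ⟪g, x - xmd⟫ + a * ⟪g, xtp - x⟫ := by
    have : xplus - xmd = (1 - a) • (xag - xmd) + a • (x - xmd) + a • (xtp - x) := by
      rw [hxplus]; module
    rw [this, inner_add_right, inner_add_right, real_inner_smul_right,
      real_inner_smul_right, real_inner_smul_right]
  -- gradient inequalities
  have h1 : G xmd + ⟪g, xag - xmd⟫ ≤ G xag := grad_ineq_aux hGconv (hGgrad xmd) xag
  have h2 : G xmd + ⟪g, x - xmd⟫ ≤ G x := grad_ineq_aux hGconv (hGgrad xmd) x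
  have key : G xplus ≤ G xmd + ⟪g, xplus - xmd⟫ + L_G / 2 * (a ^ 2 * ‖xtp - xt‖ ^ 2) := by
    rw [← hnorm]; linarith
  rw [hsplit] at key
  nlinarith [mul_le_mul_of_nonneg_left h1 (by linarith : (0:ℝ) ≤ 1 - a),
    mul_le_mul_of_nonneg_left h2 ha0]
end

section
/- For each t ≥ 1, set x̃_t := χx_t + (1−χ)x_{t+1}. Then for every x ∈ X, w ∈ 𝒲 and y ∈ 𝒴 the AADMM iterates satisfy ⟨∇G(x_t^md), x_{t+1} − x⟩ + F(w_{t+1}) − F(w) − ⟨y, Bw_{t+1} − Kx_{t+1} − b⟩ + ⟨y_{t+1}, Bw − Kx − b⟩ ≤ ⟨η_t(x_t − x_{t+1}), x_{t+1} − x⟩ + ⟨y_{t+1} − y, Bw_{t+1} − Kx_{t+1} − b⟩ − ⟨(θ_t/ρ_t − 1)(y_t − y_{t+1}), −K(x_{t+1} − x)⟩ − ⟨(τ_t/ρ_t − 1)(y_t − y_{t+1}), B(w_{t+1} − w)⟩ + θ_t⟨K(x_{t+1} − x̃_t), K(x_{t+1} − x)⟩ + θ_t⟨B(w_{t+1} −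 w_t), −K(x_{t+1} − x)⟩. -/
open RealInnerProductSpace


open Filter in
private lemma aux0 {a b c : ℝ} (h : ∀ l : ℝ, 0 < l → l ≤ 1 → a ≤ b + c * l) : a ≤ b := by
  have h2 : ∀ n : ℕ, a ≤ b + c * (1 / (n + 1 : ℝ)) := fun n =>
    h _ (by positivity) (by
      rw [div_le_one (by positivity)]
      linarith [(Nat.cast_nonneg n : (0:ℝ) ≤ n)])
  have ht : Tendsto (fun n : ℕ => b + c * (1 / (n + 1 : ℝ))) atTop (nhds (b + c * 0)) :=
    tendsto_const_nhds.add (tendsto_one_div_add_atTop_nhds_zero_nat.const_mul c)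
  simpa using ge_of_tendsto' ht h2

set_option maxHeartbeats 2000000 in
theorem stmt_6
    {𝒲 𝒳 𝒴 : Type*}
    [NormedAddCommGroup 𝒲] [InnerProductSpace ℝ 𝒲] [FiniteDimensional ℝ 𝒲]
    [NormedAddCommGroup 𝒳] [InnerProductSpace ℝ 𝒳] [FiniteDimensional ℝ 𝒳]
    [NormedAddCommGroup 𝒴] [InnerProductSpace ℝ 𝒴] [FiniteDimensional ℝ 𝒴]
    (X : Set 𝒳) (hXclosed : IsClosed X) (hXconv : Convex ℝ X)
    (G : 𝒳 → ℝ) (G' : 𝒳 → 𝒳) (hGgrad : ∀ p, HasGradientAt G (G' p) p)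
    (hGconv : ConvexOn ℝ Set.univ G)
    (L_G : ℝ) (hLG : 0 < L_G)
    (hGsmooth : ∀ x₁ ∈ X, ∀ x₂ ∈ X,
      G x₂ - G x₁ - ⟪G' x₁, x₂ - x₁⟫ ≤ L_G / 2 * ‖x₂ - x₁‖ ^ 2)
    (F : 𝒲 → ℝ) (hFconv : ConvexOn ℝ Set.univ F) (hFlsc : LowerSemicontinuous F)
    (K : 𝒳 →L[ℝ] 𝒴) (B : 𝒲 →L[ℝ] 𝒴) (b : 𝒴)
    (χ : ℝ) (hχ : χ = 0 ∨ χ = 1)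
    (α η θ τ ρ : ℕ → ℝ)
    (hα : ∀ t, 1 ≤ t → 0 < α t ∧ α t ≤ 1)
    (hη : ∀ t, 1 ≤ t → 0 < η t) (hθ : ∀ t, 1 ≤ t → 0 ≤ θ t)
    (hτ : ∀ t, 1 ≤ t → 0 < τ t) (hρ : ∀ t, 1 ≤ t → 0 < ρ t)
    (x xag xmd : ℕ → 𝒳) (w wag : ℕ → 𝒲) (y yag : ℕ → 𝒴)
    (hx1 : x 1 ∈ X) (hw1 : B (w 1) = K (x 1) + b) (hy1 : y 1 = 0)
    (hxag1 : xag 1 = x 1) (hwag1 : wag 1 = w 1) (hyag1 : yag 1 = y 1)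
    (hxmd : ∀ t, 1 ≤ t → xmd t = (1 - α t) • xag t + α t • x t)
    (hxmem : ∀ t, 1 ≤ t → x (t + 1) ∈ X)
    (hxstep : ∀ t, 1 ≤ t → ∀ u ∈ X,
      ⟪G' (xmd t), x (t + 1)⟫ - χ * θ t * ⟪B (w t) - K (x t) - b, K (x (t + 1))⟫
        + (1 - χ) * θ t / 2 * ‖B (w t) - K (x (t + 1)) - b‖ ^ 2
        + ⟪y t, K (x (t + 1))⟫ + η t / 2 * ‖x (t + 1) - x t‖ ^ 2
      ≤ ⟪G' (xmd t), u⟫ - χ * θ t * ⟪B (w t) - K (x t) - b, K u⟫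
        + (1 - χ) * θ t / 2 * ‖B (w t) - K u - b‖ ^ 2
        + ⟪y t, K u⟫ + η t / 2 * ‖u - x t‖ ^ 2)
    (hxagstep : ∀ t, 1 ≤ t → xag (t + 1) = (1 - α t) • xag t + α t • x (t + 1))
    (hwstep : ∀ t, 1 ≤ t → ∀ u : 𝒲,
      F (w (t + 1)) - ⟪y t, B (w (t + 1))⟫ + τ t / 2 * ‖B (w (t + 1)) - K (x (t + 1)) - b‖ ^ 2
      ≤ F u - ⟪y t, B u⟫ + τ t / 2 * ‖B u - K (x (t + 1)) - b‖ ^ 2)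
    (hwagstep : ∀ t, 1 ≤ t → wag (t + 1) = (1 - α t) • wag t + α t • w (t + 1))
    (hystep : ∀ t, 1 ≤ t → y (t + 1) = y t - ρ t • (B (w (t + 1)) - K (x (t + 1)) - b))
    (hyagstep : ∀ t, 1 ≤ t → yag (t + 1) = (1 - α t) • yag t + α t • y (t + 1))
    :
    ∀ t, 1 ≤ t → ∀ wv : 𝒲, ∀ xv ∈ X, ∀ yv : 𝒴,
      ⟪G' (xmd t), x (t + 1) - xv⟫ + F (w (t + 1)) - F wv
        - ⟪yv, B (w (t + 1)) - K (x (t + 1)) - b⟫ + ⟪y (t + 1), B wv - K xv - b⟫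
      ≤ ⟪η t • (x t - x (t + 1)), x (t + 1) - xv⟫
        + ⟪y (t + 1) - yv, B (w (t + 1)) - K (x (t + 1)) - b⟫
        - ⟪(θ t / ρ t - 1) • (y t - y (t + 1)), -(K (x (t + 1)) - K xv)⟫
        - ⟪(τ t / ρ t - 1) • (y t - y (t + 1)), B (w (t + 1)) - B wv⟫
        + θ t * ⟪K (x (t + 1) - (χ • x t + (1 - χ) • x (t + 1))), K (x (t + 1)) - K xv⟫
        + θ t * ⟪B (w (t + 1)) - B (w t), -(K (x (t + 1)) - K xv)⟫ := by
  intro t ht wv xv hxv yv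
  have hy' := hystep t ht
  have hρ0 : ρ t ≠ 0 := (hρ t ht).ne'
  have hd : y t - y (t + 1) = ρ t • (B (w (t + 1)) - K (x (t + 1)) - b) := by
    rw [hy']; abel
  have hxVI : ⟪G' (xmd t), x (t + 1) - xv⟫ ≤
      χ * θ t * ⟪B (w t) - K (x t) - b, K (x (t + 1)) - K xv⟫
      + (1 - χ) * θ t * ⟪B (w t) - K (x (t + 1)) - b, K (x (t + 1)) - K xv⟫
      - ⟪y t, K (x (t + 1)) - K xv⟫ + η t * ⟪x t - x (t + 1), x (t + 1) - xv⟫ := by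
    apply aux0 (c := (1 - χ) * θ t / 2 * ⟪K xv - K (x (t + 1)), K xv - K (x (t + 1))⟫
      + η t / 2 * ⟪xv - x (t + 1), xv - x (t + 1)⟫)
    intro l hl0 hl1
    have hu : (1 - l) • x (t + 1) + l • xv ∈ X :=
      hXconv (hxmem t ht) hxv (by linarith) hl0.le (by ring)
    have h := hxstep t ht _ hu
    rw [← mul_le_mul_iff_of_pos_right hl0]
    simp only [map_add, map_smul, map_sub, inner_add_left, inner_add_right, inner_sub_left,
      inner_sub_right, real_inner_smul_left, real_inner_smul_right,
      ← real_inner_self_eq_norm_sq, real_inner_comm] at h ⊢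
    ring_nf at h ⊢
    linarith [h]
  have hwVI : F (w (t + 1)) - F wv ≤ ⟪y t, B (w (t + 1)) - B wv⟫
      - τ t * ⟪B (w (t + 1)) - K (x (t + 1)) - b, B (w (t + 1)) - B wv⟫ := by
    apply aux0 (c := τ t / 2 * ⟪B wv - B (w (t + 1)), B wv - B (w (t + 1))⟫)
    intro l hl0 hl1
    have h := hwstep t ht ((1 - l) • w (t + 1) + l • wv)
    have hF : F ((1 - l) • w (t + 1) + l • wv) ≤ (1 - l) * F (w (t + 1)) + l * F wv :=
      hFconv.2 (Set.mem_univ _) (Set.mem_univ _) (by linarith) hl0.le (by ring)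
    rw [← mul_le_mul_iff_of_pos_right hl0]
    simp only [map_add, map_smul, map_sub, inner_add_left, inner_add_right, inner_sub_left,
      inner_sub_right, real_inner_smul_left, real_inner_smul_right,
      ← real_inner_self_eq_norm_sq, real_inner_comm] at h ⊢
    ring_nf at h hF ⊢
    linarith [h, hF]
  have hid1 : (θ t / ρ t - 1) • (y t - y (t + 1))
      = (θ t - ρ t) • (B (w (t + 1)) - K (x (t + 1)) - b) := by
    rw [hd, smul_smul]; congr 1; field_simp
  have hid2 : (τ t / ρ t - 1) • (y t - y (t + 1))
      = (τ t - ρ t) • (B (w (t + 1)) - K (x (t + 1)) - b) := by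
    rw [hd, smul_smul]; congr 1; field_simp
  rw [hid1, hid2, hy']
  simp only [map_add, map_smul, map_sub, inner_add_left, inner_add_right, inner_sub_left,
    inner_sub_right, real_inner_smul_left, real_inner_smul_right, inner_neg_left,
    inner_neg_right, ← real_inner_self_eq_norm_sq, real_inner_comm] at hxVI hwVI ⊢
  ring_nf at hxVI hwVI ⊢
  linarith [hxVI, hwVI]
end

section
/- Let (α_i)_{i=1}^t ⊂ (0,1], let (Γ_i)_{i=1}^t be positive reals, (γ_i)_{i=1}^t nonnegative reals, let S ⊆ V be a bounded set with diameter D_S := sup_{s₁,s₂∈S}‖s₁ − s₂‖, let v ∈ S and let (v_i)_{i=1}^{t+1} be a sequence contained in S. If the sequence (α_iγ_i/Γ_i)_{i=1}^t is nondecreasing, then 𝓑_t(v, v_{[t+1]}, γ_{[t]}) ≤ (α_tγ_t/(2Γ_t))D_S² − (α_tγ_t/(2Γ_t))‖v_{t+1} − v‖². -/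
open RealInnerProductSpace

theorem stmt_9
    {V : Type*} [NormedAddCommGroup V] [InnerProductSpace ℝ V] [FiniteDimensional ℝ V]
    (t : ℕ) (ht : 1 ≤ t)
    (α Γ γ : ℕ → ℝ)
    (hα : ∀ i, 1 ≤ i → i ≤ t → 0 < α i ∧ α i ≤ 1)
    (hΓ : ∀ i, 1 ≤ i → i ≤ t → 0 < Γ i)
    (hγ : ∀ i, 1 ≤ i → i ≤ t → 0 ≤ γ i)
    (hinc : ∀ i, 1 ≤ i → i + 1 ≤ t → α i * γ i / Γ i ≤ α (i + 1) * γ (i + 1) / Γ (i + 1))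
    (S : Set V) (hS : Bornology.IsBounded S)
    (v : V) (hv : v ∈ S) (vs : ℕ → V) (hvs : ∀ i, 1 ≤ i → i ≤ t + 1 → vs i ∈ S) :
    ∑ i ∈ Finset.Icc 1 t, α i * γ i / (2 * Γ i) * (‖vs i - v‖ ^ 2 - ‖vs (i + 1) - v‖ ^ 2)
      ≤ α t * γ t / (2 * Γ t) * Metric.diam S ^ 2
        - α t * γ t / (2 * Γ t) * ‖vs (t + 1) - v‖ ^ 2 := by
  have hD : ∀ i, 1 ≤ i → i ≤ t + 1 → ‖vs i - v‖ ^ 2 ≤ Metric.diam S ^ 2 := by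
    intro i h1 h2
    have : ‖vs i - v‖ ≤ Metric.diam S := by
      rw [← dist_eq_norm]
      exact Metric.dist_le_diam_of_mem hS (hvs i h1 h2) hv
    exact pow_le_pow_left₀ (norm_nonneg _) this 2
  have hc : ∀ i, 1 ≤ i → i ≤ t → 0 ≤ α i * γ i / (2 * Γ i) := by
    intro i h1 h2
    apply div_nonneg (mul_nonneg (hα i h1 h2).1.le (hγ i h1 h2))
    linarith [hΓ i h1 h2]
  clear hv hS hα hγ hΓ
  induction t, ht using Nat.le_induction with
  | base =>
    simp only [Finset.Icc_self, Finset.sum_singleton]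
    have h1 := hD 1 le_rfl (by norm_num)
    have hc1 := hc 1 le_rfl le_rfl
    nlinarith [hD 2 (by norm_num) (by norm_num)]
  | succ n hn ih =>
    have ihn := ih (fun i h1 h2 => hinc i h1 (by omega))
      (fun i h1 h2 => hvs i h1 (h2.trans (by omega)))
      (fun i h1 h2 => hD i h1 (by omega))
      (fun i h1 h2 => hc i h1 (by omega))
    rw [Finset.sum_Icc_succ_top (by omega : 1 ≤ n + 1)]
    have hcn := hc n hn (by omega)
    have hcn1 := hc (n + 1) (by omega) le_rfl
    have e : ∀ a g : ℝ, a / (2 * g) = a / g / 2 := fun a g => by rw [div_div, mul_comm]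
    have hmono : α n * γ n / (2 * Γ n) ≤ α (n + 1) * γ (n + 1) / (2 * Γ (n + 1)) := by
      have h := hinc n hn (by omega)
      rw [e, e]
      linarith
    have han1 := hD (n + 1) (by omega) (by omega)
    have han2 := hD (n + 2) (by omega) (by omega)
    nlinarith [sq_nonneg ‖vs (n + 1) - v‖]
end

section
/- Let L_min > 0 and L_G > 0 with L_min ≤ 2L_G. Suppose the sequences (α_t)_{t≥1} ⊂ (0,1], (Γ_t)_{t≥0} of positive reals and (L_t)_{t≥1} satisfy: Γ_0 ≥ L_min; for all t ≥ 1, Γ_t = (1−α_t)Γ_{t−1}, L_tα_t² = Γ_t, and L_min ≤ L_t ≤ 2L_G. Then for every t ≥ 1, L_min/(t+1)² ≤ Γ_t ≤ 8L_G/t². -/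
open RealInnerProductSpace

theorem stmt_15
    (L_min L_G : ℝ) (hLmin : 0 < L_min) (hLG : 0 < L_G) (hle : L_min ≤ 2 * L_G)
    (α Γ L : ℕ → ℝ)
    (hΓpos : ∀ t, 0 < Γ t)
    (hΓ0 : L_min ≤ Γ 0)
    (hα : ∀ t, 1 ≤ t → 0 < α t ∧ α t ≤ 1)
    (hΓrec : ∀ t, 1 ≤ t → Γ t = (1 - α t) * Γ (t - 1))
    (hL : ∀ t, 1 ≤ t → L t * α t ^ 2 = Γ t)
    (hLbd : ∀ t, 1 ≤ t → L_min ≤ L t ∧ L t ≤ 2 * L_G) :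
    ∀ t : ℕ, 1 ≤ t → L_min / ((t : ℝ) + 1) ^ 2 ≤ Γ t ∧ Γ t ≤ 8 * L_G / (t : ℝ) ^ 2 := by
  -- Lower bound, for all n (including 0)
  have hlow : ∀ n : ℕ, L_min / ((n : ℝ) + 1) ^ 2 ≤ Γ n := by
    intro n
    induction n with
    | zero => simpa using hΓ0
    | succ n ih =>
      by_contra hcon
      push_neg at hcon
      have hcast : ((n + 1 : ℕ) : ℝ) = (n : ℝ) + 1 := by push_cast; ring
      rw [hcast] at hcon
      set T : ℝ := (n : ℝ) with hT
      have hTnn : 0 ≤ T := Nat.cast_nonneg n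
      obtain ⟨hαp, hαl⟩ := hα (n + 1) (by omega)
      have hrec : Γ (n + 1) = (1 - α (n + 1)) * Γ n := by
        simpa using hΓrec (n + 1) (by omega)
      have hLeq := hL (n + 1) (by omega)
      obtain ⟨hL1, hL2⟩ := hLbd (n + 1) (by omega)
      have hG : 0 < Γ (n + 1) := hΓpos _
      have hG0 : 0 < Γ n := hΓpos _
      -- α (n+1) < 1/(T+2)
      have hA2 : α (n + 1) ^ 2 < (1 / (T + 2)) ^ 2 := by
        have h1 : L_min * α (n + 1) ^ 2 ≤ L (n + 1) * α (n + 1) ^ 2 :=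
          mul_le_mul_of_nonneg_right hL1 (sq_nonneg _)
      -- L_min * α² ≤ Γ (n+1) < L_min/(T+2)^2
        have h2 : L_min * α (n + 1) ^ 2 < L_min * (1 / (T + 2)) ^ 2 := by
          rw [hLeq] at h1
          calc L_min * α (n + 1) ^ 2 ≤ Γ (n + 1) := h1
            _ < L_min / (T + 1 + 1) ^ 2 := hcon
            _ = L_min * (1 / (T + 2)) ^ 2 := by rw [div_pow, one_pow, mul_one_div]; ring_nf
        exact lt_of_mul_lt_mul_left h2 hLmin.le
      have hA : α (n + 1) < 1 / (T + 2) :=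
        lt_of_pow_lt_pow_left₀ 2 (by positivity) hA2
      have hA' : α (n + 1) * (T + 2) < 1 := by
        rw [lt_div_iff₀ (by positivity)] at hA; linarith
      have hcon' : Γ (n + 1) * (T + 2) ^ 2 < L_min := by
        rw [lt_div_iff₀ (by positivity)] at hcon
        calc Γ (n + 1) * (T + 2) ^ 2 = Γ (n + 1) * (T + 1 + 1) ^ 2 := by ring
          _ < L_min := hcon
      have ih' : L_min ≤ Γ n * (T + 1) ^ 2 := by
        rw [div_le_iff₀ (by positivity)] at ih
        exact ih
      nlinarith [mul_pos hG0 (show (0 : ℝ) < T + 2 by positivity),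
        mul_lt_mul_of_pos_left hA' (mul_pos hG0 (show (0 : ℝ) < T + 2 by positivity)),
        sq_nonneg (T + 1), hG0.le]
  -- Upper bound, for all n ≥ 1
  have hup : ∀ n : ℕ, Γ (n + 1) ≤ 8 * L_G / ((n : ℝ) + 1) ^ 2 := by
    intro n
    induction n with
    | zero =>
      obtain ⟨hαp, hαl⟩ := hα 1 (by omega)
      have hLeq := hL 1 (by omega)
      obtain ⟨hL1, hL2⟩ := hLbd 1 (by omega)
      have h0 : 0 < L 1 := lt_of_lt_of_le hLmin hL1
      have hα2 : α 1 ^ 2 ≤ 1 := by nlinarith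
      have : Γ 1 ≤ 2 * L_G := by
        calc Γ 1 = L 1 * α 1 ^ 2 := hLeq.symm
          _ ≤ L 1 * 1 := mul_le_mul_of_nonneg_left hα2 h0.le
          _ = L 1 := mul_one _
          _ ≤ 2 * L_G := hL2
      norm_num
      linarith
    | succ n ih =>
      by_contra hcon
      push_neg at hcon
      have hcast : ((n + 1 : ℕ) : ℝ) = (n : ℝ) + 1 := by push_cast; ring
      rw [hcast] at hcon
      set T : ℝ := (n : ℝ) with hT
      have hTnn : 0 ≤ T := Nat.cast_nonneg n
      obtain ⟨hαp, hαl⟩ := hα (n + 2) (by omega)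
      have hrec : Γ (n + 2) = (1 - α (n + 2)) * Γ (n + 1) := by
        simpa using hΓrec (n + 2) (by omega)
      have hLeq := hL (n + 2) (by omega)
      obtain ⟨hL1, hL2⟩ := hLbd (n + 2) (by omega)
      have hG : 0 < Γ (n + 2) := hΓpos _
      have hG0 : 0 < Γ (n + 1) := hΓpos _
      -- 2/(T+2) < α (n+2)
      have hA2 : (2 / (T + 2)) ^ 2 < α (n + 2) ^ 2 := by
        have h1 : L (n + 2) * α (n + 2) ^ 2 ≤ 2 * L_G * α (n + 2) ^ 2 :=
          mul_le_mul_of_nonneg_right hL2 (sq_nonneg _)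
        have h2 : 2 * L_G * (2 / (T + 2)) ^ 2 < 2 * L_G * α (n + 2) ^ 2 := by
          rw [hLeq] at h1
          calc 2 * L_G * (2 / (T + 2)) ^ 2 = 8 * L_G / (T + 1 + 1) ^ 2 := by
                field_simp; ring_nf
            _ < Γ (n + 2) := hcon
            _ ≤ 2 * L_G * α (n + 2) ^ 2 := h1
        exact lt_of_mul_lt_mul_left h2 (by positivity)
      have hA : 2 / (T + 2) < α (n + 2) :=
        lt_of_pow_lt_pow_left₀ 2 hαp.le hA2
      have hA' : 2 < α (n + 2) * (T + 2) := by
        rw [div_lt_iff₀ (by positivity)] at hA; linarith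
      have hcon' : 8 * L_G < Γ (n + 2) * (T + 2) ^ 2 := by
        rw [div_lt_iff₀ (by positivity)] at hcon
        calc (8 : ℝ) * L_G < Γ (n + 2) * (T + 1 + 1) ^ 2 := hcon
          _ = Γ (n + 2) * (T + 2) ^ 2 := by ring
      have ih' : Γ (n + 1) * (T + 1) ^ 2 ≤ 8 * L_G := by
        rw [le_div_iff₀ (by positivity)] at ih
        exact ih
      nlinarith [mul_pos hG0 (show (0 : ℝ) < T + 2 by positivity),
        mul_lt_mul_of_pos_left hA' (mul_pos hG0 (show (0 : ℝ) < T + 2 by positivity)),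
        sq_nonneg (T + 1), hG0.le]
  intro t ht
  obtain ⟨n, rfl⟩ : ∃ n, t = n + 1 := ⟨t - 1, by omega⟩
  constructor
  · have := hlow (n + 1)
    push_cast at this ⊢
    convert this using 2
  · have := hup n
    push_cast at this ⊢
    convert this using 2
end

section
/- Let ρ > 0, y_t ∈ 𝒲 and u ∈ 𝒲. Suppose w⁺ is a minimizer over 𝒲 of w ↦ F(w) − ⟨y_t, w⟩ + (ρ/2)‖w − u‖², and set y⁺ := y_t − ρ(w⁺ − u). Then y⁺ is a minimizer over 𝒲 of y ↦ F*(y) + (1/(2ρ))‖y − (y_t + ρu)‖², where F*(y) := sup_{w∈𝒲}(⟨y, w⟩ − F(w)) ∈ ℝ ∪ {+∞}; in particular F*(y⁺) < ∞, i.e. y⁺ ∈ dom F*. -/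
open RealInnerProductSpace

theorem stmt_16
    {𝒲 : Type*} [NormedAddCommGroup 𝒲] [InnerProductSpace ℝ 𝒲] [FiniteDimensional ℝ 𝒲]
    (F : 𝒲 → ℝ) (hFconv : ConvexOn ℝ Set.univ F) (hFlsc : LowerSemicontinuous F)
    (ρv : ℝ) (hρv : 0 < ρv) (yt u wplus : 𝒲)
    (hmin : ∀ wv : 𝒲, F wplus - ⟪yt, wplus⟫ + ρv / 2 * ‖wplus - u‖ ^ 2
      ≤ F wv - ⟪yt, wv⟫ + ρv / 2 * ‖wv - u‖ ^ 2)
    (yplus : 𝒲) (hyplus : yplus = yt - ρv • (wplus - u)) :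
    (∀ yv : 𝒲,
      (⨆ wv : 𝒲, ((⟪yplus, wv⟫ - F wv : ℝ) : EReal))
          + ((1 / (2 * ρv) * ‖yplus - (yt + ρv • u)‖ ^ 2 : ℝ) : EReal)
        ≤ (⨆ wv : 𝒲, ((⟪yv, wv⟫ - F wv : ℝ) : EReal))
          + ((1 / (2 * ρv) * ‖yv - (yt + ρv • u)‖ ^ 2 : ℝ) : EReal)) ∧
    (⨆ wv : 𝒲, ((⟪yplus, wv⟫ - F wv : ℝ) : EReal)) < ⊤ := by
  -- subgradient inequality: sup attained at wplus
  have hsub : ∀ v : 𝒲, ⟪yplus, v⟫ - F v ≤ ⟪yplus, wplus⟫ - F wplus := by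
    intro v
    set d := v - wplus with hd
    have key : ∀ t : ℝ, 0 < t → t ≤ 1 →
        0 ≤ (F v - F wplus - ⟪yt, d⟫ + ρv * ⟪wplus - u, d⟫) + ρv * t / 2 * ‖d‖ ^ 2 := by
      intro t ht ht1
      have hconv := hFconv.2 (Set.mem_univ wplus) (Set.mem_univ v)
        (by linarith : (0:ℝ) ≤ 1 - t) ht.le (by ring)
      have hpt : (1 - t) • wplus + t • v = wplus + t • d := by
        rw [hd]; module
      rw [hpt] at hconv
      have hm := hmin (wplus + t • d)
      have hn : ‖wplus + t • d - u‖ ^ 2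
          = ‖wplus - u‖ ^ 2 + 2 * (t * ⟪wplus - u, d⟫) + t ^ 2 * ‖d‖ ^ 2 := by
        have h1 : wplus + t • d - u = (wplus - u) + t • d := by abel
        rw [h1, @norm_add_sq_real, real_inner_smul_right, norm_smul,
          Real.norm_eq_abs, abs_of_pos ht]
        ring
      have hi : ⟪yt, wplus + t • d⟫ = ⟪yt, wplus⟫ + t * ⟪yt, d⟫ := by
        rw [inner_add_right, real_inner_smul_right]
      rw [hn, hi] at hm
      simp only [smul_eq_mul] at hconv
      have h2 : 0 ≤ t * ((F v - F wplus - ⟪yt, d⟫ + ρv * ⟪wplus - u, d⟫)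
          + ρv * t / 2 * ‖d‖ ^ 2) := by nlinarith [hconv, hm]
      nlinarith [h2, ht]
    have hA : 0 ≤ F v - F wplus - ⟪yt, d⟫ + ρv * ⟪wplus - u, d⟫ := by
      by_contra hcon
      push_neg at hcon
      set A := F v - F wplus - ⟪yt, d⟫ + ρv * ⟪wplus - u, d⟫ with hAdef
      have hd0 : d ≠ 0 := by
        intro h0
        have hv : v = wplus := by rwa [hd, sub_eq_zero] at h0
        rw [hAdef, h0, hv] at hcon
        simp at hcon
      have hdn : 0 < ‖d‖ ^ 2 := pow_pos (norm_pos_iff.2 hd0) 2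
      set t : ℝ := min 1 (-A / (ρv * ‖d‖ ^ 2)) with htdef
      have ht0 : 0 < t := lt_min one_pos (div_pos (by linarith) (mul_pos hρv hdn))
      have ht1 : t ≤ 1 := min_le_left _ _
      have ht2 : t ≤ -A / (ρv * ‖d‖ ^ 2) := min_le_right _ _
      have hk := key t ht0 ht1
      have ht3 : t * (ρv * ‖d‖ ^ 2) ≤ -A :=
        (le_div_iff₀ (mul_pos hρv hdn)).1 ht2
      nlinarith [hk, ht3, ht0]
    have hip : ⟪yplus, d⟫ = ⟪yt, d⟫ - ρv * ⟪wplus - u, d⟫ := by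
      rw [hyplus, inner_sub_left, real_inner_smul_left]
    have hdd : ⟪yplus, v⟫ - ⟪yplus, wplus⟫ = ⟪yplus, d⟫ := by
      rw [hd, inner_sub_right]
    linarith [hA, hip ▸ hdd]
  have hsup : (⨆ wv : 𝒲, ((⟪yplus, wv⟫ - F wv : ℝ) : EReal))
      = ((⟪yplus, wplus⟫ - F wplus : ℝ) : EReal) := by
    apply le_antisymm
    · exact iSup_le fun w => EReal.coe_le_coe_iff.2 (hsub w)
    · exact le_iSup (fun wv : 𝒲 => ((⟪yplus, wv⟫ - F wv : ℝ) : EReal)) wplus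
  constructor
  · intro yv
    rw [hsup]
    set z := yt + ρv • u with hz
    have hyz : yplus - z = -(ρv • wplus) := by
      rw [hyplus, hz]; module
    have hyp2 : yplus = z - ρv • wplus := by
      rw [hyplus, hz]; module
    have hreal : ⟪yplus, wplus⟫ - F wplus + 1 / (2 * ρv) * ‖yplus - z‖ ^ 2
        ≤ ⟪yv, wplus⟫ - F wplus + 1 / (2 * ρv) * ‖yv - z‖ ^ 2 := by
      have hn1 : ‖yplus - z‖ ^ 2 = ρv ^ 2 * ‖wplus‖ ^ 2 := by
        rw [hyz, norm_neg, norm_smul, Real.norm_eq_abs, abs_of_pos hρv]; ring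
      have hi1 : ⟪yplus, wplus⟫ = ⟪z, wplus⟫ - ρv * ‖wplus‖ ^ 2 := by
        rw [hyp2, inner_sub_left, real_inner_smul_left, real_inner_self_eq_norm_sq]
      have hi2 : ⟪yv, wplus⟫ = ⟪z, wplus⟫ - ⟪z - yv, wplus⟫ := by
        rw [inner_sub_left]; ring
      have hcs : ⟪z - yv, wplus⟫ ≤ ‖z - yv‖ * ‖wplus‖ := real_inner_le_norm _ _
      have hnn : ‖yv - z‖ = ‖z - yv‖ := norm_sub_rev _ _
      rw [hn1, hi1, hi2, hnn]
      have hsq : 0 ≤ (‖z - yv‖ - ρv * ‖wplus‖) ^ 2 := sq_nonneg _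
      have hkey : ‖z - yv‖ * ‖wplus‖ - ρv / 2 * ‖wplus‖ ^ 2 ≤ ‖z - yv‖ ^ 2 / (2 * ρv) := by
        rw [le_div_iff₀ (by positivity : (0:ℝ) < 2 * ρv)]
        nlinarith [hsq]
      have he1 : 1 / (2 * ρv) * (ρv ^ 2 * ‖wplus‖ ^ 2) = ρv / 2 * ‖wplus‖ ^ 2 := by
        field_simp
      have he2 : 1 / (2 * ρv) * ‖z - yv‖ ^ 2 = ‖z - yv‖ ^ 2 / (2 * ρv) := by ring
      rw [he1, he2]
      linarith [hcs, hkey]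
    calc ((⟪yplus, wplus⟫ - F wplus : ℝ) : EReal)
          + ((1 / (2 * ρv) * ‖yplus - z‖ ^ 2 : ℝ) : EReal)
        = ((⟪yplus, wplus⟫ - F wplus + 1 / (2 * ρv) * ‖yplus - z‖ ^ 2 : ℝ) : EReal) := by
          rw [EReal.coe_add]
      _ ≤ ((⟪yv, wplus⟫ - F wplus + 1 / (2 * ρv) * ‖yv - z‖ ^ 2 : ℝ) : EReal) :=
          EReal.coe_le_coe_iff.2 hreal
      _ = ((⟪yv, wplus⟫ - F wplus : ℝ) : EReal)
          + ((1 / (2 * ρv) * ‖yv - z‖ ^ 2 : ℝ) : EReal) := by rw [EReal.coe_add]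
      _ ≤ (⨆ wv : 𝒲, ((⟪yv, wv⟫ - F wv : ℝ) : EReal))
          + ((1 / (2 * ρv) * ‖yv - z‖ ^ 2 : ℝ) : EReal) := by
          gcongr
          exact le_iSup (fun wv : 𝒲 => ((⟪yv, wv⟫ - F wv : ℝ) : EReal)) wplus
  · rw [hsup]
    exact EReal.coe_lt_top _
end
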